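/- arXiv:2011.08069 — 5 statements merged into one kernel-verified Lean document; each statement's English description precedes it below -/
import Mathlib

section
/- Let X be a type with an adjacency relation adj, and let f : X → ℤ have sensitivity A, i.e. |f x − f x'| ≤ A for all adjacent x, x', where A > 0. Let ε > 0, 0 < δ < 1, and λ > 0 with λ ≥ A/ε. Let t be a real number with t ≥ A and t ≥ λ·ln((exp(A/λ) − 1 + δ)/(2δ)). Define the mechanism M x to be the pushforward of the truncated Laplace measure Lap(λ, −t) under the map u ↦ (f x : ℝ) + t + ⌊u⌋. Then M is (ε, δ)-differentially private: for all adjacent x, x' and every measurable set O ⊆ ℝ, (M x) O ≤ exp(ε)·(M x') O + δ. -/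
open MeasureTheory Real

/-- The Laplace measure with mean 0 and scale `l`: density `u ↦ (1/(2l)) exp(-|u|/l)`
with respect to Lebesgue measure. -/
noncomputable def laplaceMeasure (l : ℝ) : Measure ℝ :=
  volume.withDensity (fun u => ENNReal.ofReal ((1 / (2 * l)) * Real.exp (-|u| / l)))

/-- The Laplace measure with scale `l`, truncated (conditioned) to the interval `(-t, ∞)`. -/
noncomputable def truncLaplace (l t : ℝ) : Measure ℝ :=
  (laplaceMeasure l (Set.Ioi (-t)))⁻¹ • (laplaceMeasure l).restrict (Set.Ioi (-t))

open scoped ENNReal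
open Set in
lemma lapIoc (l a b : ℝ) (hl : 0 < l) (hab : a ≤ b) (hb : b ≤ 0) :
    laplaceMeasure l (Set.Ioc a b)
      = ENNReal.ofReal ((1/2) * (Real.exp (b/l) - Real.exp (a/l))) := by
  rw [laplaceMeasure, withDensity_apply _ measurableSet_Ioc]
  have h1 : ∀ᵐ u ∂volume, u ∈ Set.Ioc a b →
      ENNReal.ofReal ((1 / (2 * l)) * Real.exp (-|u| / l))
        = ENNReal.ofReal ((1 / (2 * l)) * Real.exp (u / l)) := by
    refine ae_of_all _ fun u hu => ?_
    have : |u| = -u := abs_of_nonpos (hu.2.trans hb)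
    rw [this, neg_neg]
  rw [setLIntegral_congr_fun_ae measurableSet_Ioc h1]
  rw [← ofReal_integral_eq_lintegral_ofReal]
  · congr 1
    rw [← intervalIntegral.integral_of_le hab]
    have hcd : ∀ x : ℝ, (1 / (2 * l)) * Real.exp (x / l) = (1 / (2*l)) * Real.exp (x / l) := fun _ => rfl
    rw [intervalIntegral.integral_const_mul]
    rw [intervalIntegral.integral_comp_div (f := Real.exp) (c := l) (ne_of_gt hl)]
    rw [integral_exp]
    simp only [smul_eq_mul]
    field_simp
  · exact (Continuous.integrableOn_Ioc (by continuity))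
  · exact ae_of_all _ fun u => by positivity

lemma lapIoiZero (l : ℝ) (hl : 0 < l) :
    laplaceMeasure l (Set.Ioi 0) = ENNReal.ofReal (1/2) := by
  rw [laplaceMeasure, withDensity_apply _ measurableSet_Ioi]
  have h1 : ∀ᵐ u ∂volume, u ∈ Set.Ioi (0:ℝ) →
      ENNReal.ofReal ((1 / (2 * l)) * Real.exp (-|u| / l))
        = ENNReal.ofReal ((1 / (2 * l)) * Real.exp (-u / l)) := by
    refine ae_of_all _ fun u hu => ?_
    rw [abs_of_pos hu]
  rw [setLIntegral_congr_fun_ae measurableSet_Ioi h1]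
  have hint : IntegrableOn (fun x => Real.exp (-x/l)) (Set.Ioi (0:ℝ)) := by
    have := exp_neg_integrableOn_Ioi 0 (b := 1/l) (by positivity)
    refine this.congr_fun (fun x _ => by ring_nf) measurableSet_Ioi
  rw [← ofReal_integral_eq_lintegral_ofReal]
  · congr 1
    rw [integral_const_mul]
    have key : ∀ x ∈ Set.Ici (0:ℝ), HasDerivAt (fun x => -l * Real.exp (-x/l)) (Real.exp (-x/l)) x := by
      intro x _
      have hd : HasDerivAt (fun x : ℝ => -x/l) (-1/l) x := by
        simpa using ((hasDerivAt_id x).neg.div_const l)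
      have h2 := ((hd.exp).const_mul (-l))
      refine h2.congr_deriv ?_
      field_simp [hl.ne']
    have htend : Filter.Tendsto (fun x => -l * Real.exp (-x/l)) Filter.atTop (nhds 0) := by
      have h3 : Filter.Tendsto (fun x : ℝ => -x/l) Filter.atTop Filter.atBot := by
        apply Filter.Tendsto.atBot_div_const hl
        exact Filter.tendsto_neg_atBot_iff.mpr Filter.tendsto_id
      have := (Real.tendsto_exp_atBot.comp h3).const_mul (-l)
      simpa using this
    have := integral_Ioi_of_hasDerivAt_of_tendsto
      (key 0 Set.self_mem_Ici).continuousAt.continuousWithinAt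
      (fun x hx => key x (Set.mem_Ici.mpr (le_of_lt (Set.mem_Ioi.mp hx)))) hint htend
    rw [this]
    simp
    field_simp
  · exact hint.const_mul _
  · exact ae_of_all _ fun u => by positivity

lemma lapIoi (l t : ℝ) (hl : 0 < l) (ht : 0 ≤ t) :
    laplaceMeasure l (Set.Ioi (-t))
      = ENNReal.ofReal (1 - (1/2) * Real.exp (-t/l)) := by
  have h1 : Real.exp ((-t)/l) ≤ 1 := by
    rw [Real.exp_le_one_iff]
    exact div_nonpos_of_nonpos_of_nonneg (neg_nonpos.mpr ht) hl.le
  have h12 : (0:ℝ) ≤ 1/2 * (Real.exp (0/l) - Real.exp ((-t)/l)) := by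
    rw [zero_div, Real.exp_zero]; nlinarith
  have hsplit : Set.Ioc (-t) 0 ∪ Set.Ioi (0:ℝ) = Set.Ioi (-t) :=
    Set.Ioc_union_Ioi_eq_Ioi (neg_nonpos.mpr ht)
  have hdisj : Disjoint (Set.Ioc (-t) (0:ℝ)) (Set.Ioi 0) := Set.Ioc_disjoint_Ioi le_rfl
  rw [← hsplit, measure_union hdisj measurableSet_Ioi,
    lapIoc l _ _ hl (neg_nonpos.mpr ht) le_rfl, lapIoiZero l hl,
    ← ENNReal.ofReal_add h12 (by norm_num)]
  congr 1
  rw [zero_div, Real.exp_zero]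
  ring


lemma lapDensMeasurable (l : ℝ) :
    Measurable (fun u : ℝ => ENNReal.ofReal ((1 / (2 * l)) * Real.exp (-|u| / l))) := by
  apply Measurable.ennreal_ofReal
  exact (measurable_const.mul ((((measurable_id.abs).neg).div_const l).exp))

lemma lapShift (l c B : ℝ) (hl : 0 < l) (hc : |c| ≤ B) (F : Set ℝ) (hF : MeasurableSet F) :
    laplaceMeasure l ((fun u => u + c) ⁻¹' F)
      ≤ ENNReal.ofReal (Real.exp (B/l)) * laplaceMeasure l F := by
  set g : ℝ → ℝ≥0∞ := fun u => ENNReal.ofReal ((1 / (2 * l)) * Real.exp (-|u| / l)) with hg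
  have hgm : Measurable g := lapDensMeasurable l
  have hpre : MeasurableSet ((fun u => u + c) ⁻¹' F) := (measurable_add_const c) hF
  rw [laplaceMeasure, withDensity_apply _ hpre, withDensity_apply _ hF]
  have step1 : ∫⁻ u in (fun u => u + c) ⁻¹' F, g u ∂volume
      = ∫⁻ v in F, g (v - c) ∂volume := by
    rw [← lintegral_indicator hpre, ← lintegral_indicator hF]
    have : ∀ u : ℝ, Set.indicator ((fun u => u + c) ⁻¹' F) g u
        = Set.indicator F (fun v => g (v - c)) (u + c) := by
      intro u
      by_cases h : u + c ∈ F
      · rw [Set.indicator_of_mem h, Set.indicator_of_mem (by exact h)]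
        simp
      · rw [Set.indicator_of_notMem h, Set.indicator_of_notMem (by exact h)]
    simp_rw [this]
    exact lintegral_add_right_eq_self _ c
  rw [step1]
  have bound : ∀ v : ℝ, g (v - c) ≤ ENNReal.ofReal (Real.exp (B/l)) * g v := by
    intro v
    rw [hg]
    simp only
    rw [← ENNReal.ofReal_mul (Real.exp_nonneg _)]
    apply ENNReal.ofReal_le_ofReal
    have h0 : -|v - c| ≤ B - |v| := by
      have := abs_sub_abs_le_abs_sub v (v - c)
      simp only [sub_sub_cancel] at this
      linarith
    have h1 : -|v - c| / l ≤ (B - |v|) / l := by gcongr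
    calc (1 / (2 * l)) * Real.exp (-|v - c| / l)
        ≤ (1 / (2 * l)) * Real.exp ((B - |v|) / l) := by
          apply mul_le_mul_of_nonneg_left (Real.exp_le_exp.mpr h1) (by positivity)
      _ = Real.exp (B/l) * ((1 / (2 * l)) * Real.exp (-|v| / l)) := by
          rw [mul_comm (Real.exp (B/l)), mul_assoc, ← Real.exp_add]
          congr 2
          ring
  calc ∫⁻ v in F, g (v - c) ∂volume
      ≤ ∫⁻ v in F, ENNReal.ofReal (Real.exp (B/l)) * g v ∂volume :=
        lintegral_mono fun v => bound v
    _ = _ := lintegral_const_mul _ hgm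


/-- The noised-floor mechanism `M x = (f x : ℝ) + t + ⌊u⌋`, with `u ~ Lap(λ, -t)`,
is `(ε, δ)`-differentially private when `f` has sensitivity `A`, `λ ≥ A/ε`,
`t ≥ A` and `t ≥ λ ln((e^{A/λ} - 1 + δ)/(2δ))`. -/
theorem floor_truncated_laplace_mechanism_dp
    {X : Type*} (adj : X → X → Prop) (f : X → ℤ) (A ε δ lam t : ℝ)
    (hA : 0 < A) (hsens : ∀ x x', adj x x' → |(f x : ℝ) - (f x' : ℝ)| ≤ A)
    (hε : 0 < ε) (hδ0 : 0 < δ) (hδ1 : δ < 1) (hlam : 0 < lam)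
    (hlamε : A / ε ≤ lam) (htA : A ≤ t)
    (ht : lam * Real.log ((Real.exp (A / lam) - 1 + δ) / (2 * δ)) ≤ t)
    (M : X → Measure ℝ)
    (hM : ∀ x, M x = (truncLaplace lam t).map (fun u => (f x : ℝ) + t + (⌊u⌋ : ℝ))) :
    ∀ x x', adj x x' → ∀ O : Set ℝ, MeasurableSet O →
      M x O ≤ ENNReal.ofReal (Real.exp ε) * M x' O + ENNReal.ofReal δ := by

  intro x x' hadj O hO
  have hfloor : Measurable (fun u : ℝ => (⌊u⌋ : ℝ)) :=
    measurable_from_top.comp Int.measurable_floor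
  have hmeas : ∀ y : X, Measurable (fun u : ℝ => (f y : ℝ) + t + (⌊u⌋ : ℝ)) :=
    fun y => measurable_const.add hfloor
  have ht0 : 0 ≤ t := (hA.le.trans htA)
  set μ := laplaceMeasure lam with hμ
  set Z := μ (Set.Ioi (-t)) with hZ
  have hZval : Z = ENNReal.ofReal (1 - 1/2 * Real.exp (-t/lam)) := lapIoi lam t hlam ht0
  have hexp1 : Real.exp (-t/lam) ≤ 1 := by
    rw [Real.exp_le_one_iff]
    exact div_nonpos_of_nonpos_of_nonneg (neg_nonpos.mpr ht0) hlam.le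
  have hZrpos : 0 < 1 - 1/2 * Real.exp (-t/lam) := by nlinarith [Real.exp_pos (-t/lam)]
  have hZpos : Z ≠ 0 := by rw [hZval]; simpa using hZrpos
  have hZfin : Z ≠ ⊤ := by rw [hZval]; exact ENNReal.ofReal_ne_top
  set d : ℤ := f x - f x' with hd
  set c : ℝ := (d : ℝ) with hc
  have hcA : |c| ≤ A := by
    rw [hc, hd]
    push_cast
    exact hsens x x' hadj
  set S' : Set ℝ := (fun u => (f x' : ℝ) + t + (⌊u⌋ : ℝ)) ⁻¹' O with hS'def
  have hS' : MeasurableSet S' := (hmeas x') hO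
  have hSx : (fun u : ℝ => (f x : ℝ) + t + (⌊u⌋ : ℝ)) ⁻¹' O = (fun u => u + c) ⁻¹' S' := by
    ext u
    simp only [Set.mem_preimage, hS'def]
    have : (f x' : ℝ) + t + (⌊u + c⌋ : ℝ) = (f x : ℝ) + t + (⌊u⌋ : ℝ) := by
      rw [hc, Int.floor_add_intCast]
      push_cast [hd]
      ring
    rw [this]
  -- rewrite both sides
  rw [hM x, hM x', Measure.map_apply (hmeas x) hO, Measure.map_apply (hmeas x') hO,
    truncLaplace, Measure.smul_apply, Measure.smul_apply, smul_eq_mul, smul_eq_mul,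
    Measure.restrict_apply ((hmeas x) hO), Measure.restrict_apply ((hmeas x') hO), hSx]
  rw [← hμ, ← hZ]
  -- key inclusion
  have hincl : ((fun u => u + c) ⁻¹' S') ∩ Set.Ioi (-t)
      ⊆ ((fun u => u + c) ⁻¹' (S' ∩ Set.Ioi (-t))) ∪ Set.Ioc (-t) (-t + A) := by
    rintro u ⟨hu1, hu2⟩
    by_cases h : u + c ∈ Set.Ioi (-t)
    · exact Or.inl ⟨hu1, h⟩
    · refine Or.inr ⟨hu2, ?_⟩
      simp only [Set.mem_Ioi, not_lt] at h
      have : -A ≤ c := neg_le_of_abs_le hcA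
      linarith
  have hmono : μ (((fun u => u + c) ⁻¹' S') ∩ Set.Ioi (-t))
      ≤ μ ((fun u => u + c) ⁻¹' (S' ∩ Set.Ioi (-t))) + μ (Set.Ioc (-t) (-t + A)) :=
    (measure_mono hincl).trans (measure_union_le _ _)
  -- shift bound
  have hAε : A / lam ≤ ε := by
    rw [div_le_iff₀ hlam]
    have h := (div_le_iff₀ hε).mp hlamε
    nlinarith
  have hshift : μ ((fun u => u + c) ⁻¹' (S' ∩ Set.Ioi (-t)))
      ≤ ENNReal.ofReal (Real.exp ε) * μ (S' ∩ Set.Ioi (-t)) := by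
    refine (lapShift lam c A hlam hcA _ (hS'.inter measurableSet_Ioi)).trans ?_
    gcongr
  -- edge bound
  have hedge : μ (Set.Ioc (-t) (-t + A)) ≤ ENNReal.ofReal δ * Z := by
    rw [hμ, lapIoc lam _ _ hlam (by linarith) (by linarith), hZval,
      ← ENNReal.ofReal_mul hδ0.le]
    apply ENNReal.ofReal_le_ofReal
    -- real inequality
    have hRpos : 0 < (Real.exp (A / lam) - 1 + δ) / (2 * δ) := by
      have h1 : 1 < Real.exp (A / lam) := Real.one_lt_exp_iff.mpr (by positivity)
      have h2 : 0 < Real.exp (A / lam) - 1 + δ := by nlinarith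
      positivity
    have hlog : Real.log ((Real.exp (A / lam) - 1 + δ) / (2 * δ)) ≤ t / lam := by
      rw [le_div_iff₀ hlam]
      nlinarith [ht]
    have hexpt : (Real.exp (A / lam) - 1 + δ) / (2 * δ) ≤ Real.exp (t / lam) := by
      calc (Real.exp (A / lam) - 1 + δ) / (2 * δ)
          = Real.exp (Real.log ((Real.exp (A / lam) - 1 + δ) / (2 * δ))) := (Real.exp_log hRpos).symm
        _ ≤ Real.exp (t / lam) := Real.exp_le_exp.mpr hlog
    have hkey : (Real.exp (A / lam) - 1 + δ) * Real.exp (-t/lam) ≤ 2 * δ := by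
      have h2 : Real.exp (-t/lam) = (Real.exp (t/lam))⁻¹ := by
        rw [← Real.exp_neg]; congr 1; ring
      rw [h2]
      rw [div_le_iff₀ (by positivity)] at hexpt
      have hep : 0 < Real.exp (t/lam) := Real.exp_pos _
      rw [mul_inv_le_iff₀ hep]
      nlinarith
    have hsub : Real.exp ((-t + A)/lam) = Real.exp (A/lam) * Real.exp (-t/lam) := by
      rw [← Real.exp_add]; congr 1; ring
    nlinarith [Real.exp_pos (-t/lam)]
  -- assemble
  calc Z⁻¹ * μ (((fun u => u + c) ⁻¹' S') ∩ Set.Ioi (-t))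
      ≤ Z⁻¹ * (ENNReal.ofReal (Real.exp ε) * μ (S' ∩ Set.Ioi (-t)) + ENNReal.ofReal δ * Z) := by
        gcongr
        exact hmono.trans (add_le_add hshift hedge)
    _ = ENNReal.ofReal (Real.exp ε) * (Z⁻¹ * μ (S' ∩ Set.Ioi (-t)))
          + ENNReal.ofReal δ * (Z⁻¹ * Z) := by
        rw [mul_add]
        ring
    _ = ENNReal.ofReal (Real.exp ε) * (Z⁻¹ * μ (S' ∩ Set.Ioi (-t))) + ENNReal.ofReal δ := by
        rw [ENNReal.inv_mul_cancel hZpos hZfin, mul_one]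
end

section
/- Let X be a type with an adjacency relation adj, and let f : X → ℤ have sensitivity A, i.e. |f x − f x'| ≤ A for all adjacent x, x', where A > 0. Let ε > 0, 0 < δ < 1, and λ > 0 with λ ≥ A/ε. Let t be a real number with t ≥ A and t ≥ λ·ln((exp(A/λ) − 1 + δ)/(2δ)). Define the mechanism G x to be the pushforward of the truncated Laplace measure Lap(λ, −t) under the map u ↦ (f x : ℝ) + u. Then G is (ε, δ)-differentially private: for all adjacent x, x' and every measurable set O ⊆ ℝ, (G x) O ≤ exp(ε)·(G x') O + δ. -/
open MeasureTheory Real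
open Set

lemma lap_meas (l : ℝ) : Measurable fun u : ℝ => ENNReal.ofReal ((1 / (2 * l)) * Real.exp (-|u| / l)) := by
  fun_prop

lemma lap_Ioc {l : ℝ} (hl : 0 < l) {a b : ℝ} (hab : a ≤ b) (hb : b ≤ 0) :
    laplaceMeasure l (Set.Ioc a b)
      = ENNReal.ofReal ((Real.exp (b / l) - Real.exp (a / l)) / 2) := by
  rw [laplaceMeasure, withDensity_apply _ measurableSet_Ioc]
  have h1 : ∀ u ∈ Set.Ioc a b,
      ENNReal.ofReal ((1 / (2 * l)) * Real.exp (-|u| / l))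
        = ENNReal.ofReal ((1 / (2 * l)) * Real.exp (u / l)) := by
    intro u hu
    rw [abs_of_nonpos (hu.2.trans hb), neg_neg]
  rw [setLIntegral_congr_fun measurableSet_Ioc h1]
  rw [← ofReal_integral_eq_lintegral_ofReal]
  · congr 1
    rw [← intervalIntegral.integral_of_le hab, intervalIntegral.integral_const_mul,
      intervalIntegral.integral_comp_div (fun x => Real.exp x) hl.ne', integral_exp]
    field_simp
    ring
  · apply Continuous.integrableOn_Ioc
    fun_prop
  · filter_upwards with u
    positivity

lemma lap_Ioi0 {l : ℝ} (hl : 0 < l) :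
    laplaceMeasure l (Set.Ioi 0) = ENNReal.ofReal (1 / 2) := by
  rw [laplaceMeasure, withDensity_apply _ measurableSet_Ioi]
  have h1 : ∀ u ∈ Set.Ioi (0:ℝ),
      ENNReal.ofReal ((1 / (2 * l)) * Real.exp (-|u| / l))
        = ENNReal.ofReal ((1 / (2 * l)) * Real.exp (-((1/l) * u))) := by
    intro u hu
    rw [abs_of_pos hu]
    ring_nf
  rw [setLIntegral_congr_fun measurableSet_Ioi h1]
  rw [← ofReal_integral_eq_lintegral_ofReal]
  · congr 1
    rw [integral_const_mul]
    have := integral_comp_mul_left_Ioi (fun x => Real.exp (-x)) 0 (b := 1/l) (by positivity)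
    simp only [mul_zero] at this
    rw [show (fun u : ℝ => Real.exp (-((1/l) * u))) = (fun u : ℝ => (fun x => Real.exp (-x)) ((1/l) * u)) from rfl]
    rw [this, integral_exp_neg_Ioi_zero]
    simp
    field_simp
  · have := exp_neg_integrableOn_Ioi 0 (b := 1/l) (by positivity)
    have h2 : IntegrableOn (fun u : ℝ => Real.exp (-((1/l) * u))) (Set.Ioi 0) := by
      simpa [neg_mul] using this
    exact h2.const_mul _
  · filter_upwards with u
    positivity

lemma lap_Ioi {l t : ℝ} (hl : 0 < l) (htpos : 0 < t) :
    laplaceMeasure l (Set.Ioi (-t)) = ENNReal.ofReal (1 - Real.exp (-t / l) / 2) := by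
  have hsplit : Set.Ioi (-t) = Set.Ioc (-t) 0 ∪ Set.Ioi (0:ℝ) :=
    (Set.Ioc_union_Ioi_eq_Ioi (by linarith)).symm
  rw [hsplit, measure_union (Set.Ioc_disjoint_Ioi le_rfl) measurableSet_Ioi,
    lap_Ioc hl (by linarith) le_rfl, lap_Ioi0 hl,
    ← ENNReal.ofReal_add ?_ (by norm_num)]
  · congr 1
    simp [Real.exp_zero]
    ring
  · have h : Real.exp (-t / l) ≤ 1 := by
      rw [Real.exp_le_one_iff]
      rw [neg_div]
      simp only [neg_nonpos]
      positivity
    have h0 : Real.exp (0 / l) = 1 := by rw [zero_div, Real.exp_zero]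
    rw [h0]
    linarith

lemma density_ratio {l A d : ℝ} (hl : 0 < l) (hd : |d| ≤ A) (u : ℝ) :
    (1 / (2 * l)) * Real.exp (-|u| / l)
      ≤ Real.exp (A / l) * ((1 / (2 * l)) * Real.exp (-|u + d| / l)) := by
  have habs : |u + d| ≤ |u| + A := (abs_add_le u d).trans (by linarith)
  have h1 : Real.exp (-|u| / l) ≤ Real.exp (A / l) * Real.exp (-|u + d| / l) := by
    rw [← Real.exp_add]
    apply Real.exp_le_exp.2
    rw [← add_div]
    exact (div_le_div_iff_of_pos_right hl).2 (by linarith)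
  calc (1 / (2 * l)) * Real.exp (-|u| / l)
      ≤ (1 / (2 * l)) * (Real.exp (A / l) * Real.exp (-|u + d| / l)) :=
        mul_le_mul_of_nonneg_left h1 (by positivity)
    _ = Real.exp (A / l) * ((1 / (2 * l)) * Real.exp (-|u + d| / l)) := by ring

lemma lintegral_translate (F : ℝ → ENNReal) (d : ℝ) {T : Set ℝ} (hT : MeasurableSet T) :
    (∫⁻ u in T, F (u + d)) = ∫⁻ v in (fun v : ℝ => v - d) ⁻¹' T, F v := by
  have hS'm : MeasurableSet ((fun v : ℝ => v - d) ⁻¹' T) := hT.preimage (measurable_sub_const d)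
  rw [← lintegral_indicator hT, ← lintegral_indicator hS'm]
  have heq : ∀ u : ℝ, T.indicator (fun u => F (u + d)) u
      = (((fun v : ℝ => v - d) ⁻¹' T).indicator F) (u + d) := by
    intro u
    by_cases h : u ∈ T
    · rw [Set.indicator_of_mem h, Set.indicator_of_mem (by simpa using h)]
    · rw [Set.indicator_of_notMem h, Set.indicator_of_notMem (by simpa using h)]
  calc (∫⁻ u, T.indicator (fun u => F (u + d)) u)
      = ∫⁻ u, (((fun v : ℝ => v - d) ⁻¹' T).indicator F) (u + d) := by simp_rw [heq]
    _ = ∫⁻ u, (((fun v : ℝ => v - d) ⁻¹' T).indicator F) u :=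
        lintegral_add_right_eq_self _ d

/-- The truncated-Laplace additive mechanism `G x = (f x : ℝ) + u`, with `u ~ Lap(λ, -t)`,
is `(ε, δ)`-differentially private when `f` has sensitivity `A`, `λ ≥ A/ε`,
`t ≥ A` and `t ≥ λ ln((e^{A/λ} - 1 + δ)/(2δ))`. -/
theorem truncated_laplace_mechanism_dp
    {X : Type*} (adj : X → X → Prop) (f : X → ℤ) (A ε δ lam t : ℝ)
    (hA : 0 < A) (hsens : ∀ x x', adj x x' → |(f x : ℝ) - (f x' : ℝ)| ≤ A)
    (hε : 0 < ε) (hδ0 : 0 < δ) (hδ1 : δ < 1) (hlam : 0 < lam)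
    (hlamε : A / ε ≤ lam) (htA : A ≤ t)
    (ht : lam * Real.log ((Real.exp (A / lam) - 1 + δ) / (2 * δ)) ≤ t)
    (G : X → Measure ℝ)
    (hG : ∀ x, G x = (truncLaplace lam t).map (fun u => (f x : ℝ) + u)) :
    ∀ x x', adj x x' → ∀ O : Set ℝ, MeasurableSet O →
      G x O ≤ ENNReal.ofReal (Real.exp ε) * G x' O + ENNReal.ofReal δ := by
  intro x x' hadj O hO
  have ht0 : 0 < t := hA.trans_le htA
  set a : ℝ := (f x : ℝ) with ha
  set a' : ℝ := (f x' : ℝ) with ha'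
  set d : ℝ := a - a' with hdd
  have hd : |d| ≤ A := hsens x x' hadj
  set c₀ : ℝ := 1 - Real.exp (-t / lam) / 2 with hc₀
  have hexp1 : Real.exp (-t / lam) < 1 := by
    rw [Real.exp_lt_one_iff, neg_div, neg_neg_iff_pos]
    positivity
  have hc₀pos : 0 < c₀ := by
    have := Real.exp_pos (-t / lam)
    simp only [hc₀]; linarith
  have hc : laplaceMeasure lam (Set.Ioi (-t)) = ENNReal.ofReal c₀ := lap_Ioi hlam ht0
  have hcne0 : ENNReal.ofReal c₀ ≠ 0 := by
    simp [ENNReal.ofReal_eq_zero, not_le, hc₀pos]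
  have hcnetop : ENNReal.ofReal c₀ ≠ ⊤ := ENNReal.ofReal_ne_top
  -- the mechanism's measure in explicit form
  have hGapp : ∀ y : X, ∀ S : Set ℝ, MeasurableSet S →
      G y S = (ENNReal.ofReal c₀)⁻¹ *
        laplaceMeasure lam (((fun u => (f y : ℝ) + u) ⁻¹' S) ∩ Set.Ioi (-t)) := by
    intro y S hS
    rw [hG y, Measure.map_apply (by fun_prop) hS, truncLaplace, Measure.smul_apply,
      Measure.restrict_apply (hS.preimage (by fun_prop)), hc, smul_eq_mul]
    -- sets
  set P : Set ℝ := (fun u => a + u) ⁻¹' O with hPdef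
  set P' : Set ℝ := (fun u => a' + u) ⁻¹' O with hP'def
  have hPm : MeasurableSet P := hO.preimage (by fun_prop)
  have hP'm : MeasurableSet P' := hO.preimage (by fun_prop)
  set T1 : Set ℝ := P ∩ Set.Ioi (-t) ∩ {u | -t < u + d} with hT1def
  set T2 : Set ℝ := P ∩ Set.Ioi (-t) ∩ {u | u + d ≤ -t} with hT2def
  have hT1m : MeasurableSet T1 :=
    (hPm.inter measurableSet_Ioi).inter (measurableSet_Ioi.preimage (measurable_add_const d))
  have hcover : P ∩ Set.Ioi (-t) ⊆ T1 ∪ T2 := by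
    intro u hu
    rcases le_or_gt (u + d) (-t) with h | h
    · exact Or.inr ⟨hu, h⟩
    · exact Or.inl ⟨hu, h⟩
  -- bound for T2
  have hT2sub : T2 ⊆ Set.Ioc (-t) (A - t) := by
    rintro u ⟨⟨_, hu1⟩, hu2⟩
    have h1 : -t < u := hu1
    have h2 : u + d ≤ -t := hu2
    have h3 : -d ≤ A := (neg_le_abs d).trans hd
    exact ⟨h1, by linarith⟩
  have hT2bound : laplaceMeasure lam T2
      ≤ ENNReal.ofReal ((Real.exp ((A - t) / lam) - Real.exp (-t / lam)) / 2) :=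
    (measure_mono hT2sub).trans_eq (lap_Ioc hlam (by linarith) (by linarith))
  -- key real inequality
  have hkey : (Real.exp ((A - t) / lam) - Real.exp (-t / lam)) / 2 ≤ δ * c₀ := by
    have hspos : 0 < Real.exp (-t / lam) := Real.exp_pos _
    have hE : Real.exp ((A - t) / lam) = Real.exp (A / lam) * Real.exp (-t / lam) := by
      rw [← Real.exp_add]
      congr 1
      ring
    have h1exp : (1 : ℝ) < Real.exp (A / lam) := by
      rw [show (1 : ℝ) = Real.exp 0 from (Real.exp_zero).symm]
      exact Real.exp_lt_exp.2 (by positivity)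
    have hR : 0 < (Real.exp (A / lam) - 1 + δ) / (2 * δ) := by
      apply div_pos (by linarith) (by linarith)
    have hlog : Real.log ((Real.exp (A / lam) - 1 + δ) / (2 * δ)) ≤ t / lam := by
      rw [mul_comm] at ht
      exact (le_div_iff₀ hlam).2 ht
    have hRle : (Real.exp (A / lam) - 1 + δ) / (2 * δ) ≤ Real.exp (t / lam) := by
      calc (Real.exp (A / lam) - 1 + δ) / (2 * δ)
          = Real.exp (Real.log ((Real.exp (A / lam) - 1 + δ) / (2 * δ))) :=
            (Real.exp_log hR).symm
        _ ≤ Real.exp (t / lam) := Real.exp_le_exp.2 hlog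
    have hst : Real.exp (-t / lam) * Real.exp (t / lam) = 1 := by
      rw [← Real.exp_add, neg_div, neg_add_cancel, Real.exp_zero]
    have h2 : Real.exp (A / lam) - 1 + δ ≤ 2 * δ * Real.exp (t / lam) := by
      rw [div_le_iff₀ (by linarith)] at hRle
      linarith
    have h3 : Real.exp (-t / lam) * (Real.exp (A / lam) - 1 + δ) ≤ 2 * δ := by
      calc Real.exp (-t / lam) * (Real.exp (A / lam) - 1 + δ)
          ≤ Real.exp (-t / lam) * (2 * δ * Real.exp (t / lam)) :=
            mul_le_mul_of_nonneg_left h2 hspos.le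
        _ = 2 * δ * (Real.exp (-t / lam) * Real.exp (t / lam)) := by ring
        _ = 2 * δ := by rw [hst, mul_one]
    rw [hE, hc₀]
    nlinarith [h3, hspos]
  -- bound for T1
  have hAlam : A / lam ≤ ε := by
    rw [div_le_iff₀ hε] at hlamε
    rw [div_le_iff₀ hlam]
    nlinarith
  have hT1bound : laplaceMeasure lam T1
      ≤ ENNReal.ofReal (Real.exp (A / lam)) * laplaceMeasure lam (P' ∩ Set.Ioi (-t)) := by
    have step1 : laplaceMeasure lam T1 ≤ ENNReal.ofReal (Real.exp (A / lam)) *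
        ∫⁻ u in T1, ENNReal.ofReal ((1 / (2 * lam)) * Real.exp (-|u + d| / lam)) := by
      rw [laplaceMeasure, withDensity_apply _ hT1m,
        ← lintegral_const_mul _ (show Measurable fun u : ℝ =>
          ENNReal.ofReal ((1 / (2 * lam)) * Real.exp (-|u + d| / lam)) by fun_prop)]
      apply lintegral_mono
      intro u
      dsimp only
      rw [← ENNReal.ofReal_mul (Real.exp_nonneg _)]
      exact ENNReal.ofReal_le_ofReal (density_ratio hlam hd u)
    have htrans : (∫⁻ u in T1, ENNReal.ofReal ((1 / (2 * lam)) * Real.exp (-|u + d| / lam)))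
        = ∫⁻ v in (fun v : ℝ => v - d) ⁻¹' T1,
            ENNReal.ofReal ((1 / (2 * lam)) * Real.exp (-|v| / lam)) :=
      lintegral_translate (fun w => ENNReal.ofReal ((1 / (2 * lam)) * Real.exp (-|w| / lam))) d hT1m
    have hsub : (fun v : ℝ => v - d) ⁻¹' T1 ⊆ P' ∩ Set.Ioi (-t) := by
      intro v hv
      obtain ⟨⟨hvP, hvI⟩, hvD⟩ := hv
      refine ⟨?_, by simpa using hvD⟩
      have h1 : a + (v - d) ∈ O := hvP
      have h2 : a + (v - d) = a' + v := by rw [hdd]; ring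
      rw [h2] at h1
      exact h1
    calc laplaceMeasure lam T1
        ≤ ENNReal.ofReal (Real.exp (A / lam)) *
            ∫⁻ u in T1, ENNReal.ofReal ((1 / (2 * lam)) * Real.exp (-|u + d| / lam)) := step1
      _ = ENNReal.ofReal (Real.exp (A / lam)) *
            ∫⁻ v in (fun v : ℝ => v - d) ⁻¹' T1,
              ENNReal.ofReal ((1 / (2 * lam)) * Real.exp (-|v| / lam)) := by rw [htrans]
      _ ≤ ENNReal.ofReal (Real.exp (A / lam)) *
            ∫⁻ v in P' ∩ Set.Ioi (-t),
              ENNReal.ofReal ((1 / (2 * lam)) * Real.exp (-|v| / lam)) :=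
          mul_le_mul_right (lintegral_mono_set hsub) _
      _ = ENNReal.ofReal (Real.exp (A / lam)) * laplaceMeasure lam (P' ∩ Set.Ioi (-t)) := by
          rw [laplaceMeasure, withDensity_apply _ (hP'm.inter measurableSet_Ioi)]
  -- assembly
  have hGx : G x O = (ENNReal.ofReal c₀)⁻¹ * laplaceMeasure lam (P ∩ Set.Ioi (-t)) :=
    hGapp x O hO
  have hGx' : G x' O = (ENNReal.ofReal c₀)⁻¹ * laplaceMeasure lam (P' ∩ Set.Ioi (-t)) :=
    hGapp x' O hO
  rw [hGx, hGx']
  calc (ENNReal.ofReal c₀)⁻¹ * laplaceMeasure lam (P ∩ Set.Ioi (-t))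
      ≤ (ENNReal.ofReal c₀)⁻¹ * (laplaceMeasure lam T1 + laplaceMeasure lam T2) :=
        mul_le_mul_right ((measure_mono hcover).trans (measure_union_le T1 T2)) _
    _ = (ENNReal.ofReal c₀)⁻¹ * laplaceMeasure lam T1
          + (ENNReal.ofReal c₀)⁻¹ * laplaceMeasure lam T2 := by rw [mul_add]
    _ ≤ (ENNReal.ofReal c₀)⁻¹ *
          (ENNReal.ofReal (Real.exp (A / lam)) * laplaceMeasure lam (P' ∩ Set.Ioi (-t)))
          + (ENNReal.ofReal c₀)⁻¹ *
            ENNReal.ofReal ((Real.exp ((A - t) / lam) - Real.exp (-t / lam)) / 2) :=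
        add_le_add (mul_le_mul_right hT1bound _) (mul_le_mul_right hT2bound _)
    _ ≤ ENNReal.ofReal (Real.exp ε) *
          ((ENNReal.ofReal c₀)⁻¹ * laplaceMeasure lam (P' ∩ Set.Ioi (-t)))
          + ENNReal.ofReal δ := by
        apply add_le_add
        · rw [mul_left_comm]
          exact mul_le_mul_left
            (ENNReal.ofReal_le_ofReal (Real.exp_le_exp.2 hAlam)) _
        · calc (ENNReal.ofReal c₀)⁻¹ *
                ENNReal.ofReal ((Real.exp ((A - t) / lam) - Real.exp (-t / lam)) / 2)
              ≤ (ENNReal.ofReal c₀)⁻¹ * ENNReal.ofReal (δ * c₀) :=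
                mul_le_mul_right (ENNReal.ofReal_le_ofReal hkey) _
            _ = ENNReal.ofReal δ * ((ENNReal.ofReal c₀)⁻¹ * ENNReal.ofReal c₀) := by
                rw [ENNReal.ofReal_mul hδ0.le]; ring
            _ = ENNReal.ofReal δ := by
                rw [ENNReal.inv_mul_cancel hcne0 hcnetop, mul_one]
end

section
/- Let λ > 0, t ≥ 0, A > 0, ε > 0 with λ ≥ A/ε, and let a, b be real numbers with |a − b| ≤ A. For c : ℝ, let M_c denote the pushforward of the truncated Laplace measure Lap(λ, −t) under the map u ↦ c + u. Then for every measurable set O ⊆ ℝ contained in the interval (a + A − t, ∞), one has (M_a) O ≤ exp(ε)·(M_b) O. -/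
open MeasureTheory Real

lemma laplace_shift (l c : ℝ) (O : Set ℝ) (hO : MeasurableSet O) :
    laplaceMeasure l ((fun u => c + u) ⁻¹' O) =
      ∫⁻ v in O, ENNReal.ofReal ((1 / (2 * l)) * Real.exp (-|v - c| / l)) ∂volume := by
  have hm : Measurable (fun u : ℝ => c + u) := measurable_const_add c
  rw [laplaceMeasure, withDensity_apply _ (hm hO)]
  have := (measurePreserving_add_left volume c).setLIntegral_comp_preimage_emb
    (MeasurableEquiv.addLeft c).measurableEmbedding
    (fun v => ENNReal.ofReal ((1 / (2 * l)) * Real.exp (-|v - c| / l))) O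
  rw [← this]
  congr 1
  ext u
  congr 1
  ring_nf

/-- Pointwise `e^ε`-ratio bound for shifted truncated Laplace measures, away from the
problematic left boundary: if `|a - b| ≤ A`, `λ ≥ A/ε`, then for every measurable
`O ⊆ (a + A - t, ∞)` we have `M_a O ≤ e^ε · M_b O`, where `M_c` is the pushforward
of `Lap(λ, -t)` under `u ↦ c + u`. -/
theorem shifted_truncLaplace_ratio_bound
    (lam t A ε : ℝ) (hlam : 0 < lam) (ht : 0 ≤ t) (hA : 0 < A) (hε : 0 < ε)
    (hlamε : A / ε ≤ lam) (a b : ℝ) (hab : |a - b| ≤ A)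
    (O : Set ℝ) (hO : MeasurableSet O) (hsub : O ⊆ Set.Ioi (a + A - t)) :
    (truncLaplace lam t).map (fun u => a + u) O ≤
      ENNReal.ofReal (Real.exp ε) * (truncLaplace lam t).map (fun u => b + u) O := by
  have hma : Measurable (fun u : ℝ => a + u) := measurable_const_add a
  have hmb : Measurable (fun u : ℝ => b + u) := measurable_const_add b
  have hsa : (fun u : ℝ => a + u) ⁻¹' O ⊆ Set.Ioi (-t) := by
    intro u hu
    have := hsub hu
    simp only [Set.mem_Ioi] at this ⊢
    linarith
  have hsb : (fun u : ℝ => b + u) ⁻¹' O ⊆ Set.Ioi (-t) := by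
    intro u hu
    have := hsub hu
    have hba : -A ≤ a - b := (abs_le.mp hab).1
    simp only [Set.mem_Ioi] at this ⊢
    linarith
  have key : ∀ (c : ℝ), Measurable (fun u : ℝ => c + u) →
      (fun u : ℝ => c + u) ⁻¹' O ⊆ Set.Ioi (-t) →
      (truncLaplace lam t).map (fun u => c + u) O =
        (laplaceMeasure lam (Set.Ioi (-t)))⁻¹ *
          ∫⁻ v in O, ENNReal.ofReal ((1 / (2 * lam)) * Real.exp (-|v - c| / lam)) ∂volume := by
    intro c hm hs
    rw [Measure.map_apply hm hO, truncLaplace, Measure.smul_apply, smul_eq_mul,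
      Measure.restrict_apply (hm hO), Set.inter_eq_self_of_subset_left hs,
      laplace_shift lam c O hO]
  rw [key a hma hsa, key b hmb hsb, ← mul_assoc, mul_comm (ENNReal.ofReal (Real.exp ε)) _,
    mul_assoc]
  refine mul_le_mul_right ?_ _
  rw [← lintegral_const_mul _ (by fun_prop)]
  refine setLIntegral_mono (by fun_prop) (fun v _ => ?_)
  rw [← ENNReal.ofReal_mul (Real.exp_nonneg ε)]
  refine ENNReal.ofReal_le_ofReal ?_
  rw [show Real.exp ε * (1 / (2 * lam) * Real.exp (-|v - b| / lam)) =
      1 / (2 * lam) * (Real.exp ε * Real.exp (-|v - b| / lam)) by ring,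
    ← Real.exp_add]
  have h1 : (0:ℝ) ≤ 1 / (2 * lam) := by positivity
  refine mul_le_mul_of_nonneg_left (Real.exp_le_exp.mpr ?_) h1
  have hAlam : A / lam ≤ ε := by
    rw [div_le_iff₀ hlam]
    rw [div_le_iff₀ hε] at hlamε
    linarith [mul_comm ε lam]
  have habs : |v - b| - |v - a| ≤ A := by
    have := abs_sub_abs_le_abs_sub (v - b) (v - a)
    have h2 : |v - b - (v - a)| = |a - b| := by rw [show v - b - (v - a) = a - b by ring]
    linarith
  have h3 : (|v - b| - |v - a|) / lam ≤ A / lam := by gcongr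
  rw [sub_div] at h3
  have h4 : |v - b| / lam - |v - a| / lam ≤ ε := h3.trans hAlam
  have h5 : -|v - a| / lam = -(|v - a| / lam) := by ring
  have h6 : -|v - b| / lam = -(|v - b| / lam) := by ring
  rw [h5, h6]; linarith
end

section
/- Correctness of the PIR query deduplication (folding) transformation: let N be a natural number, S a finite set of indices in Fin N (the L-tile indices under a common M-tile), and m : Fin N with m ∉ S (the M-tile index). For a query Q : Fin N → ZMod 2, define fold(Q) : Fin N → ZMod 2 by fold(Q)(m) = Q m + ∑_{j ∈ S} Q j, fold(Q)(j) = 0 for j ∈ S, and fold(Q)(k) = Q k for all other k. Then for any Q : Fin N → ZMod 2 and any i ∈ S, fold(Q + Pi.single i 1) = fold(Q) + Pi.single m 1. That is, if two query shares differ exactly in one bit at an index i ∈ S, then their folded versions differ exactly in the bit at index m. -/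
/-- The deduplication (folding) transformation on PIR queries: XOR the bits at the
indices in `S` into position `m`, zero out the bits at `S`, and leave the rest. -/
def pirFold {N : ℕ} (S : Finset (Fin N)) (m : Fin N) (Q : Fin N → ZMod 2) :
    Fin N → ZMod 2 :=
  fun k => if k = m then Q m + ∑ j ∈ S, Q j else if k ∈ S then 0 else Q k

/-- Correctness of PIR query deduplication: if two query shares differ exactly in one
bit at an index `i ∈ S`, then their folded versions differ exactly in the bit at `m`. -/
theorem pirFold_single_flip (N : ℕ) (S : Finset (Fin N)) (m : Fin N) (hm : m ∉ S)
    (Q : Fin N → ZMod 2) (i : Fin N) (hi : i ∈ S) :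
    pirFold S m (Q + Pi.single i 1) = pirFold S m Q + Pi.single m 1 := by
  have him : i ≠ m := fun h => hm (h ▸ hi)
  funext k
  simp only [pirFold, Pi.add_apply]
  by_cases hk : k = m
  · subst hk
    simp [Pi.single_apply, him.symm, Finset.sum_add_distrib, Finset.sum_ite_eq', hi,
      him]
    ring
  · simp [hk, Pi.single_apply]
    by_cases hkS : k ∈ S
    · simp [hkS]
    · simp [hkS]
      intro h; subst h; exact absurd hi hkS
end

section
/- Response preservation under PIR query deduplication: let N be a natural number, let V be an additive commutative group that is a module over ZMod 2, let D : Fin N → V, let S be a finite set of indices in Fin N and m : Fin N with m ∉ S, and suppose D j = D m for all j ∈ S (the blocks at S are duplicates of the block at m). For a query Q : Fin N → ZMod 2, define fold(Q) : Fin N → ZMod 2 by fold(Q)(m) = Q m + ∑_{j ∈ S} Q j, fold(Q)(j) = 0 for j ∈ S, and fold(Q)(k) = Q k for all other k. Then the server's response is unchanged by folding: ∑ k, fold(Q) k • D k = ∑ k, Q k • D k. -/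
/-- Response preservation under PIR query deduplication: if the blocks at indices in `S`
are duplicates of the block at `m ∉ S`, then the server's response to the folded query
equals its response to the original query. -/
theorem pirFold_response_eq (N : ℕ) (V : Type*) [AddCommGroup V] [Module (ZMod 2) V]
    (D : Fin N → V) (S : Finset (Fin N)) (m : Fin N) (hm : m ∉ S)
    (hdup : ∀ j ∈ S, D j = D m) (Q : Fin N → ZMod 2) :
    ∑ k, pirFold S m Q k • D k = ∑ k, Q k • D k := by
  classical
  rw [← Finset.sum_add_sum_compl (insert m S) (fun k => pirFold S m Q k • D k),
      ← Finset.sum_add_sum_compl (insert m S) (fun k => Q k • D k)]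
  congr 1
  · rw [Finset.sum_insert hm, Finset.sum_insert hm]
    have h1 : ∀ j ∈ S, pirFold S m Q j • D j = 0 := by
      intro j hj
      have hjm : j ≠ m := fun h => hm (h ▸ hj)
      simp [pirFold, hjm, hj]
    rw [Finset.sum_congr rfl h1, Finset.sum_const_zero, add_zero]
    have h2 : ∀ j ∈ S, Q j • D j = Q j • D m := fun j hj => by rw [hdup j hj]
    rw [Finset.sum_congr rfl h2, ← Finset.sum_smul]
    simp [pirFold, add_smul]
  · refine Finset.sum_congr rfl fun k hk => ?_
    simp only [Finset.mem_compl, Finset.mem_insert, not_or] at hk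
    simp [pirFold, hk.1, hk.2]
end
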